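/- Let M be a transitive permutation group on a finite set Ω with an M-normal Cartesian decomposition E = {Γ₁, ..., Γ_ℓ}. For γ ∈ Γᵢ and ω ∈ γ, the stabiliser of the block γ in M^{Γᵢ} equals M_ω ∩ M^{Γᵢ}. -/
import Mathlib


open scoped Pointwise

namespace QP

variable {Ω : Type*}

/-- `P` is a partition of `Ω`. -/
def IsPartition (P : Set (Set Ω)) : Prop :=
  ∅ ∉ P ∧ ∀ ω : Ω, ∃! b : Set Ω, b ∈ P ∧ ω ∈ b

/-- A proper partition: neither `{Ω}` nor the partition into singletons. -/
def IsProperPartition (P : Set (Set Ω)) : Prop :=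
  IsPartition P ∧ P ≠ {Set.univ} ∧ ¬ ∀ b ∈ P, ∃ ω : Ω, b = {ω}

/-- The pointwise stabiliser of the partition `P` (kernel of the action on `P`),
as a subgroup of `Sym(Ω)`: the permutations fixing every block of `P` setwise. -/
def partKernel (P : Set (Set Ω)) : Subgroup (Equiv.Perm Ω) where
  carrier := {g | ∀ b ∈ P, g • b = b}
  one_mem' := by intro b hb; simp
  mul_mem' := by
    intro g h hg hh b hb
    rw [mul_smul, hh b hb, hg b hb]
  inv_mem' := by
    intro g hg b hb
    rw [inv_smul_eq_iff, hg b hb]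

/-- The setwise stabiliser of a partition `P` in `Sym(Ω)`. -/
def partStab (P : Set (Set Ω)) : Subgroup (Equiv.Perm Ω) :=
  MulAction.stabilizer (Equiv.Perm Ω) P

/-- The permutation of the set of blocks of `P` induced by an element of
the stabiliser of `P`. -/
noncomputable def blockPerm (P : Set (Set Ω)) (g : ↥(partStab P)) : Equiv.Perm ↥P where
  toFun b := ⟨(g : Equiv.Perm Ω) • (b : Set Ω), by
    have h1 : (g : Equiv.Perm Ω) • (b : Set Ω) ∈ (g : Equiv.Perm Ω) • P :=
      Set.smul_mem_smul_set b.2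
    rwa [g.2] at h1⟩
  invFun b := ⟨(g : Equiv.Perm Ω)⁻¹ • (b : Set Ω), by
    have h0 : (g : Equiv.Perm Ω) • P = P := g.2
    have h2 : ((g : Equiv.Perm Ω)⁻¹) • P = P := by
      rw [inv_smul_eq_iff, h0]
    have h1 : (g : Equiv.Perm Ω)⁻¹ • (b : Set Ω) ∈ (g : Equiv.Perm Ω)⁻¹ • P :=
      Set.smul_mem_smul_set b.2
    rwa [h2] at h1⟩
  left_inv b := by
    apply Subtype.ext
    simp
  right_inv b := by
    apply Subtype.ext
    simp

/-- The homomorphism from the stabiliser of a partition `P` to the symmetric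
group on the set of blocks of `P`. -/
noncomputable def componentHom (P : Set (Set Ω)) : ↥(partStab P) →* Equiv.Perm ↥P where
  toFun := blockPerm P
  map_one' := by
    apply Equiv.ext; intro b
    apply Subtype.ext
    simp [blockPerm]
  map_mul' := by
    intro g h
    apply Equiv.ext; intro b
    apply Subtype.ext
    simp [blockPerm, mul_smul]

/-- The component `G^P` of `G` on a partition `P` : the permutation group
induced on the set of blocks of `P` by the setwise stabiliser of `P` in `G`. -/
noncomputable def component (G : Subgroup (Equiv.Perm Ω)) (P : Set (Set Ω)) :
    Subgroup (Equiv.Perm ↥P) :=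
  Subgroup.map (componentHom P) (G.subgroupOf (partStab P))

section abstr
variable {X : Type*} [Group X]

/-- `N` is a normal subgroup of the (sub)group `G`. -/
def IsNormalIn (N G : Subgroup X) : Prop :=
  N ≤ G ∧ ∀ g ∈ G, ∀ n ∈ N, g * n * g⁻¹ ∈ N

/-- `N` is a minimal normal subgroup of `G`. -/
def IsMinimalNormalIn (N G : Subgroup X) : Prop :=
  IsNormalIn N G ∧ N ≠ ⊥ ∧
    ∀ K : Subgroup X, IsNormalIn K G → K ≠ ⊥ → K ≤ N → K = N

/-- The socle of `G`: the subgroup generated by all minimal normal subgroups. -/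
def socle (G : Subgroup X) : Subgroup X :=
  ⨆ N ∈ {N : Subgroup X | IsMinimalNormalIn N G}, N

/-- `M` is the internal direct product of the family `N` of subgroups. -/
def IsInternalDirectProductOver {ι : Type*} (M : Subgroup X) (N : ι → Subgroup X) : Prop :=
  (∀ i, N i ≤ M) ∧
  (∀ i j, i ≠ j → ∀ x ∈ N i, ∀ y ∈ N j, Commute x y) ∧
  (⨆ i, N i) = M ∧
  (∀ i, N i ⊓ (⨆ j ∈ ({i}ᶜ : Set ι), N j) = ⊥)

end abstr

/-- A transitive permutation group on `α`. -/
def IsTransitivePerm {α : Type*} (H : Subgroup (Equiv.Perm α)) : Prop :=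
  ∀ a b : α, ∃ g ∈ H, g a = b

/-- A regular permutation group: transitive with trivial point stabilisers. -/
def IsRegularPerm {α : Type*} (H : Subgroup (Equiv.Perm α)) : Prop :=
  IsTransitivePerm H ∧ ∀ g ∈ H, ∀ a : α, g a = a → g = 1

/-- A semiregular permutation group: all point stabilisers are trivial. -/
def IsSemiregularPerm {α : Type*} (H : Subgroup (Equiv.Perm α)) : Prop :=
  ∀ g ∈ H, ∀ a : α, g a = a → g = 1

/-- A quasiprimitive permutation group: transitive, and every nontrivial
normal subgroup is transitive. -/
def IsQuasiprimitivePerm {α : Type*} (H : Subgroup (Equiv.Perm α)) : Prop :=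
  IsTransitivePerm H ∧
    ∀ N : Subgroup (Equiv.Perm α), IsNormalIn N H → N ≠ ⊥ → IsTransitivePerm N

section indexed

variable {ι : Type*}

/-- A Cartesian decomposition, indexed form: a family of pairwise distinct
proper partitions such that any choice of blocks, one from each partition,
intersects in exactly one point. -/
def IsCartesianDecomp (Γ : ι → Set (Set Ω)) : Prop :=
  (∀ i, IsProperPartition (Γ i)) ∧ Function.Injective Γ ∧
  ∀ c : ι → Set Ω, (∀ i, c i ∈ Γ i) → ∃! ω : Ω, ∀ i, ω ∈ c i

/-- The Cartesian decomposition `Γ` is `M`-normal, with `N i` playing the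
role of `M^{Γ i}`: each partition is `M`-invariant, `M` is the internal direct
product of the `N i`, each `N i` acts faithfully on `Γ i`, and
`∏_{j ≠ i} N j` is the kernel of the `M`-action on `Γ i`. -/
structure IsNormalDecomp (M : Subgroup (Equiv.Perm Ω)) (Γ : ι → Set (Set Ω))
    (N : ι → Subgroup (Equiv.Perm Ω)) : Prop where
  invariant : ∀ i, ∀ g ∈ M, ∀ b ∈ Γ i, g • b ∈ Γ i
  product : IsInternalDirectProductOver M N
  faithful : ∀ i, N i ⊓ partKernel (Γ i) = ⊥
  kernel : ∀ i, M ⊓ partKernel (Γ i) = ⨆ j ∈ ({i}ᶜ : Set ι), N j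

end indexed

section setbased

/-- A Cartesian decomposition, as a (finite) set of proper partitions. -/
def IsCartesianDecompSet (E : Set (Set (Set Ω))) : Prop :=
  E.Finite ∧ (∀ P ∈ E, IsProperPartition P) ∧
  ∀ c : Set (Set Ω) → Set Ω, (∀ P ∈ E, c P ∈ P) → ∃! ω : Ω, ∀ P ∈ E, ω ∈ c P

/-- `E` is a homogeneous Cartesian decomposition: all partitions have the same size. -/
def IsHomogeneous (E : Set (Set (Set Ω))) : Prop :=
  ∀ P ∈ E, ∀ Q ∈ E, Nat.card ↥P = Nat.card ↥Q

/-- `E` is invariant under `G`: `G` permutes the partitions in `E`. -/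
def InvariantDec (G : Subgroup (Equiv.Perm Ω)) (E : Set (Set (Set Ω))) : Prop :=
  ∀ g ∈ G, ∀ P ∈ E, g • P ∈ E

/-- `G` is transitive on `E`. -/
def TransitiveOnDec (G : Subgroup (Equiv.Perm Ω)) (E : Set (Set (Set Ω))) : Prop :=
  ∀ P ∈ E, ∀ Q ∈ E, ∃ g ∈ G, g • P = Q

/-- The Cartesian decomposition `E` is `M`-normal: `M` fixes each partition
in `E` setwise, and `M` is the internal direct product of subgroups `N P`
(`P ∈ E`), where `∏_{Q ≠ P} N Q` is the kernel of the `M`-action on `P`. -/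
def IsNormalDecompSet (M : Subgroup (Equiv.Perm Ω)) (E : Set (Set (Set Ω))) : Prop :=
  (∀ g ∈ M, ∀ P ∈ E, g • P = P) ∧
  ∃ N : Set (Set Ω) → Subgroup (Equiv.Perm Ω),
    (∀ P ∈ E, N P ≤ M) ∧
    (∀ P Q, P ∈ E → Q ∈ E → P ≠ Q → ∀ x ∈ N P, ∀ y ∈ N Q, Commute x y) ∧
    (⨆ P ∈ E, N P) = M ∧
    (∀ P ∈ E, N P ⊓ (⨆ Q ∈ E \ {P}, N Q) = ⊥) ∧
    (∀ P ∈ E, M ⊓ partKernel P = ⨆ Q ∈ E \ {P}, N Q)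

/-- `E` is a blow-up decomposition for `G`: a `G`-invariant Cartesian
decomposition on which `G` acts transitively, which is `M`-normal for some
transitive normal subgroup `M` of `G` such that `M^Γ = Soc(G^Γ)` for every
`Γ ∈ E`. -/
def IsBlowUpDecomp (G : Subgroup (Equiv.Perm Ω)) (E : Set (Set (Set Ω))) : Prop :=
  IsCartesianDecompSet E ∧ InvariantDec G E ∧ TransitiveOnDec G E ∧
  ∃ M : Subgroup (Equiv.Perm Ω), IsNormalIn M G ∧ IsTransitivePerm M ∧
    IsNormalDecompSet M E ∧ ∀ P ∈ E, component M P = socle (component G P)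

end setbased

end QP


/-- For an M-normal Cartesian decomposition, γ ∈ Γᵢ and ω ∈ γ, the
stabiliser of the block γ in M^{Γᵢ} equals M_ω ∩ M^{Γᵢ}. -/
theorem block_stabilizer_eq_point_stabilizer_inter {Ω ι : Type*} [Finite Ω] [Finite ι]
    (M : Subgroup (Equiv.Perm Ω)) (Γ : ι → Set (Set Ω))
    (N : ι → Subgroup (Equiv.Perm Ω))
    (hMtrans : QP.IsTransitivePerm M)
    (hcart : QP.IsCartesianDecomp Γ)
    (hnorm : QP.IsNormalDecomp M Γ N) :
    ∀ i : ι, ∀ γ ∈ Γ i, ∀ ω ∈ γ,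
      N i ⊓ MulAction.stabilizer (Equiv.Perm Ω) γ =
        (M ⊓ MulAction.stabilizer (Equiv.Perm Ω) ω) ⊓ N i := by
  intro i γ hγ ω hω
  obtain ⟨hproper, hinj, hcap⟩ := hcart
  have hNleM : ∀ j, N j ≤ M := hnorm.product.1
  -- choose, for each j, the block of Γ j containing ω
  choose b hbΓ hωb using fun j => ((hproper j).1.2 ω).exists
  classical
  ext g
  simp only [Subgroup.mem_inf, MulAction.mem_stabilizer_iff]
  constructor
  · rintro ⟨hgN, hgγ⟩
    refine ⟨⟨hNleM i hgN, ?_⟩, hgN⟩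
    -- define the choice function c with c i = γ
    set c : ι → Set Ω := fun j => if j = i then γ else b j with hc
    have hcΓ : ∀ j, c j ∈ Γ j := by
      intro j; by_cases h : j = i
      · simp [hc, h]; exact h ▸ hγ
      · simp [hc, h]; exact hbΓ j
    have hωc : ∀ j, ω ∈ c j := by
      intro j; by_cases h : j = i
      · simp [hc, h]; exact hω
      · simp [hc, h]; exact hωb j
    obtain ⟨x, hx, hxuniq⟩ := hcap c hcΓ
    -- g ω also lies in every c j
    have hgωc : ∀ j, g ω ∈ c j := by
      intro j; by_cases h : j = i
      · subst h
        have := Set.smul_mem_smul_set (a := g) hω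
        rw [hgγ] at this
        simpa [hc] using this
      · -- g ∈ partKernel (Γ j) since N i ≤ ⨆ k ∈ {j}ᶜ, N k = M ⊓ partKernel (Γ j)
        have hle : N i ≤ ⨆ k ∈ ({j}ᶜ : Set ι), N k := by
          exact le_iSup₂ (f := fun k (_ : k ∈ ({j}ᶜ : Set ι)) => N k) i
            (by simpa using Ne.symm h)
        rw [← hnorm.kernel j] at hle
        have hker : g ∈ QP.partKernel (Γ j) := (hle hgN).2
        have hfix : g • (b j) = b j := hker (b j) (hbΓ j)
        have := Set.smul_mem_smul_set (a := g) (hωb j)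
        rw [hfix] at this
        simpa [hc, h] using this
    have h1 : g ω = x := hxuniq _ hgωc
    have h2 : ω = x := hxuniq _ hωc
    have : g ω = ω := h1.trans h2.symm
    simpa [Equiv.Perm.smul_def] using this
  · rintro ⟨⟨hgM, hgω⟩, hgN⟩
    refine ⟨hgN, ?_⟩
    have hgγΓ : g • γ ∈ Γ i := hnorm.invariant i g hgM γ hγ
    -- ω ∈ g • γ since g ω = ω ∈ γ... rather ω = g ω ∈ g • γ
    have hωgγ : ω ∈ g • γ := by
      have := Set.smul_mem_smul_set (a := g) hω
      have hgωeq : g ω = ω := by simpa [Equiv.Perm.smul_def] using hgω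
      rwa [Equiv.Perm.smul_def, hgωeq] at this
    obtain ⟨β, hβ, hβuniq⟩ := (hproper i).1.2 ω
    exact (hβuniq _ ⟨hgγΓ, hωgγ⟩).trans (hβuniq _ ⟨hγ, hω⟩).symm
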